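/- Define the configuration c : ℤ³ → ℤ by c(i,0,0) = 1 and c(0,i,n) = 1 for all i ∈ ℤ (where n ≥ 3 is a fixed integer), and c = 0 elsewhere. Then c is not periodic: there is no nonzero t ∈ ℤ³ with c(u+t) = c(u) for all u, yet c is annihilated by the Laurent polynomial (X^{(1,0,0)} − 1)(X^{(0,1,0)} − 1). -/
import Mathlib


/-- The two-lines configuration in ℤ³ is non-periodic yet annihilated by
`(X^{(1,0,0)}-1)(X^{(0,1,0)}-1)`. -/
theorem stmt_15 (n : ℤ) (hn : 3 ≤ n) (c : ℤ × ℤ × ℤ → ℤ)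
    (hc : ∀ p : ℤ × ℤ × ℤ,
      c p = if (p.2.1 = 0 ∧ p.2.2 = 0) ∨ (p.1 = 0 ∧ p.2.2 = n) then 1 else 0) :
    (¬ ∃ t : ℤ × ℤ × ℤ, t ≠ 0 ∧ ∀ u, c (u + t) = c u) ∧
    (∀ u : ℤ × ℤ × ℤ,
      (c (u + (1, 0, 0) + (0, 1, 0)) - c (u + (0, 1, 0))) -
        (c (u + (1, 0, 0)) - c u) = 0) := by
  constructor
  · rintro ⟨⟨t1, t2, t3⟩, ht, h⟩
    have ht' : ¬(t1 = 0 ∧ t2 = 0 ∧ t3 = 0) := by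
      rintro ⟨rfl, rfl, rfl⟩; exact ht rfl
    have h1 := h (0, 0, 0)
    have h2 := h (0, 0, n)
    have h3 := h (0, 1, n)
    simp only [hc, Prod.mk_add_mk, zero_add, one_add_one_eq_two] at h1 h2 h3
    split_ifs at h1 h2 h3 <;>
      simp only [true_and, and_true, false_and, and_false, false_or, or_false,
        true_or, or_true, not_true, not_false_iff] at * <;> omega
  · rintro ⟨a, b, d⟩
    simp only [hc, Prod.mk_add_mk]
    split_ifs <;> omega
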